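/- Let (X,d) be a linear metric space such that for each nonzero x ∈ X the map t ↦ d(0,tx) is strictly increasing on [0,1], and let C ⊆ X be convex. Then C is round in the subspace topology: for every point x ∈ C and r > 0, the closure in C of the open ball equals the closed ball in C. -/

import Mathlib

theorem convex_subset_round_of_strictMono {X : Type*} [AddCommGroup X]
    [Module ℝ X] [MetricSpace X] [IsTopologicalAddGroup X] [ContinuousSMul ℝ X]
    (hinv : ∀ a x y : X, dist (a + x) (a + y) = dist x y)
    (hmono : ∀ x : X, x ≠ 0 →
      StrictMonoOn (fun t : ℝ => dist (0 : X) (t • x)) (Set.Icc 0 1))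
    (C : Set X) (hC : Convex ℝ C) :
    ∀ (x : C) (r : ℝ), 0 < r →
      closure (Metric.ball x r) = Metric.closedBall x r := by
  intro x r hr
  apply Set.Subset.antisymm
  · exact closure_minimal Metric.ball_subset_closedBall Metric.isClosed_closedBall
  · intro y hy
    rw [Metric.mem_closedBall] at hy
    by_cases hxy : (y : X) = (x : X)
    · refine subset_closure ?_
      rw [Metric.mem_ball, Subtype.dist_eq, hxy, dist_self]
      exact hr
    · set v : X := (y : X) - (x : X) with hv_def
      have hv : v ≠ 0 := sub_ne_zero.mpr hxy
      rw [Metric.mem_closure_iff]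
      intro ε hε
      -- continuous path g t = x + t • v
      set g : ℝ → X := fun t => (x : X) + t • v with hg_def
      have hgc : Continuous g := continuous_const.add (continuous_id.smul continuous_const)
      have hg1 : g 1 = (y : X) := by simp [hg_def, hv_def]
      have htend : Filter.Tendsto g (nhds 1) (nhds (y : X)) := by
        rw [← hg1]; exact hgc.tendsto 1
      have hev := (Metric.tendsto_nhds.mp htend) ε hε
      rw [Metric.eventually_nhds_iff] at hev
      obtain ⟨δ, hδ, hδε⟩ := hev
      set t : ℝ := max (1/2) (1 - δ/2) with ht_def
      have ht0 : (0:ℝ) ≤ t := le_trans (by norm_num) (le_max_left _ _)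
      have ht1 : t < 1 := by
        apply max_lt (by norm_num)
        linarith
      have htδ : dist t 1 < δ := by
        rw [Real.dist_eq, abs_sub_lt_iff]
        constructor
        · linarith
        · have : 1 - δ/2 ≤ t := le_max_right _ _
          linarith
      -- the point on the segment
      have hmem : (1 - t) • (x : X) + t • (y : X) ∈ C := by
        exact hC x.2 y.2 (by linarith) (by linarith) (by ring)
      have hzg : (1 - t) • (x : X) + t • (y : X) = g t := by
        simp only [hg_def, hv_def, smul_sub, sub_smul, one_smul]
        abel
      set z : C := ⟨(1 - t) • (x : X) + t • (y : X), hmem⟩ with hz_def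
      refine ⟨z, ?_, ?_⟩
      · rw [Metric.mem_ball, Subtype.dist_eq]
        have hdx : dist (x : X) (z : X) = dist (0 : X) (t • v) := by
          have h := hinv (x : X) 0 (t • v)
          rw [add_zero] at h
          show dist (x : X) ((1 - t) • (x : X) + t • (y : X)) = _
          rw [hzg, hg_def]
          exact h
        have hdy : dist (0 : X) ((1:ℝ) • v) = dist (x : X) (y : X) := by
          have h := hinv (x : X) 0 v
          rw [add_zero] at h
          rw [one_smul, ← h, hv_def]
          congr 1
          abel
        have hlt : dist (0 : X) (t • v) < dist (0 : X) ((1:ℝ) • v) :=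
          hmono v hv ⟨ht0, le_of_lt ht1⟩ ⟨zero_le_one, le_refl 1⟩ ht1
        rw [dist_comm, hdx]
        calc dist (0 : X) (t • v) < dist (0 : X) ((1:ℝ) • v) := hlt
          _ = dist (x : X) (y : X) := hdy
          _ ≤ r := by rw [dist_comm, ← Subtype.dist_eq]; exact hy
      · rw [Subtype.dist_eq]
        have : (z : X) = g t := hzg
        rw [this, dist_comm]
        exact hδε htδ
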